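/- Let u : ℝ → ℝ be 1-periodic in H¹ and define P(x) = (1/2)∫_ℝ e^{−|x−y|}(u²(y) + u'(y)²/2) dy. Then P is differentiable a.e. with P'(x) = (1/2)∫_ℝ sign(y−x) e^{−|x−y|}(u²(y) + u'(y)²/2) dy, and ‖P'‖_{L∞} ≤ ∫₀¹ (u²(y) + u'(y)²) dy. -/

import Mathlib

open MeasureTheory Set Filter

private lemma aux_sign_meas : Measurable Real.sign := by
  have : Real.sign = fun r : ℝ => if r < 0 then (-1 : ℝ) else if 0 < r then 1 else 0 := rfl
  rw [this]
  exact Measurable.ite (measurableSet_lt measurable_id measurable_const) measurable_const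
    (Measurable.ite (measurableSet_lt measurable_const measurable_id) measurable_const
      measurable_const)

private lemma aux_sign_abs_le (r : ℝ) : |Real.sign r| ≤ 1 := by
  rcases Real.sign_apply_eq r with h | h | h <;> rw [h] <;> norm_num

/-- exp is locally lipschitz quantitatively -/
private lemma aux_exp_lip {s t c : ℝ} (hs : s ≤ c) (ht : t ≤ c) :
    |Real.exp s - Real.exp t| ≤ Real.exp c * |s - t| := by
  wlog h : t ≤ s generalizing s t
  · rw [abs_sub_comm, abs_sub_comm s t]
    exact this ht hs (le_of_not_ge h)
  have h1 : Real.exp s * ((t - s) + 1) ≤ Real.exp t := by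
    have := Real.add_one_le_exp (t - s)
    calc Real.exp s * ((t - s) + 1) ≤ Real.exp s * Real.exp (t - s) :=
          mul_le_mul_of_nonneg_left this (Real.exp_nonneg s)
      _ = Real.exp t := by rw [← Real.exp_add]; ring_nf
  have h2 : Real.exp s ≤ Real.exp c := Real.exp_le_exp.2 hs
  have h3 : 0 ≤ Real.exp t := Real.exp_nonneg t
  rw [abs_of_nonneg (sub_nonneg.2 (Real.exp_le_exp.2 h)), abs_of_nonneg (sub_nonneg.2 h)]
  nlinarith

private lemma aux_kernel_deriv (x y : ℝ) (h : y ≠ x) :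
    HasDerivAt (fun z : ℝ => Real.exp (-|z - y|)) (Real.sign (y - x) * Real.exp (-|x - y|)) x := by
  have h1 : HasDerivAt (fun z : ℝ => z - y) 1 x := (hasDerivAt_id x).sub_const y
  rcases lt_or_gt_of_ne (sub_ne_zero.2 (Ne.symm h) : x - y ≠ 0) with hlt | hgt
  · have h2 : HasDerivAt (fun z : ℝ => |z - y|) (-1 * 1) x := by
      simpa [Function.comp_def] using (hasDerivAt_abs_neg hlt).comp x h1
    have h3 := h2.neg.exp
    convert h3 using 1
    · rfl
    rw [Real.sign_of_pos (by linarith : (0:ℝ) < y - x)]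
    simp only [Pi.neg_apply]
    ring
  · have h2 : HasDerivAt (fun z : ℝ => |z - y|) (1 * 1) x := by
      simpa [Function.comp_def] using (hasDerivAt_abs_pos hgt).comp x h1
    have h3 := h2.neg.exp
    convert h3 using 1
    · rfl
    rw [Real.sign_of_neg (by linarith : y - x < 0)]
    simp only [Pi.neg_apply]
    ring

/-- shift a set integral -/
private lemma aux_shift (h : ℝ → ℝ) {s t : Set ℝ} (hs : MeasurableSet s) (c : ℝ)
    (hst : ∀ y : ℝ, y ∈ t ↔ y + c ∈ s) :
    ∫ y in s, h y = ∫ y in t, h (y + c) := by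
  have hts : t = (fun y : ℝ => y + c) ⁻¹' s := Set.ext fun y => hst y
  have htm : MeasurableSet t := by rw [hts]; exact hs.preimage (measurable_add_const c)
  rw [← MeasureTheory.integral_indicator hs, ← MeasureTheory.integral_indicator htm,
    ← MeasureTheory.integral_add_right_eq_self (s.indicator h) c]
  congr 1
  funext y
  by_cases hy : y ∈ t
  · rw [Set.indicator_of_mem ((hst y).1 hy), Set.indicator_of_mem hy]
  · rw [Set.indicator_of_notMem (fun hc => hy ((hst y).2 hc)), Set.indicator_of_notMem hy]

private lemma aux_kb {x y : ℝ} (h1 : x < y) (h2 : y ≤ x + 1) :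
    |Real.exp (x - y) - Real.exp (y - x - 1)| ≤ 1 - Real.exp (-1) := by
  have e1 : Real.exp (x - y) ≤ 1 := Real.exp_le_one_iff.2 (by linarith)
  have e2 : Real.exp (-1) ≤ Real.exp (x - y) := Real.exp_le_exp.2 (by linarith)
  have e3 : Real.exp (y - x - 1) ≤ 1 := Real.exp_le_one_iff.2 (by linarith)
  have e4 : Real.exp (-1) ≤ Real.exp (y - x - 1) := Real.exp_le_exp.2 (by linarith)
  rw [abs_sub_le_iff]
  constructor <;> linarith

/-- differentiation under the integral sign for the kernel -/
private lemma key_deriv (f : ℝ → ℝ) (hfm : Measurable f) (hf0 : ∀ y, 0 ≤ f y)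
    (hint : ∀ x, Integrable (fun y => Real.exp (-|x - y|) * f y)) (x₀ : ℝ) :
    HasDerivAt (fun x => ∫ y : ℝ, Real.exp (-|x - y|) * f y)
      (∫ y : ℝ, Real.sign (y - x₀) * Real.exp (-|x₀ - y|) * f y) x₀ := by
  have hane : ∀ᵐ y : ℝ, y ≠ x₀ := by
    rw [MeasureTheory.ae_iff]
    simp only [ne_eq, not_not, Set.setOf_eq_eq_singleton]
    exact measure_singleton x₀
  have hbound0 : ∀ y : ℝ, 0 ≤ Real.exp 1 * (Real.exp (-|x₀ - y|) * f y) := fun y =>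
    mul_nonneg (Real.exp_nonneg 1) (mul_nonneg (Real.exp_nonneg _) (hf0 y))
  have key := hasDerivAt_integral_of_dominated_loc_of_lip (μ := volume)
    (F := fun x y => Real.exp (-|x - y|) * f y)
    (F' := fun y => Real.sign (y - x₀) * Real.exp (-|x₀ - y|) * f y)
    (bound := fun y => Real.exp 1 * (Real.exp (-|x₀ - y|) * f y))
    (Metric.ball_mem_nhds x₀ one_pos)
    (Eventually.of_forall fun x => (hint x).1)
    (hint x₀)
    ?_ ?_ ((hint x₀).const_mul (Real.exp 1)) ?_
  · exact key.2
  · have hsgn : Measurable (fun y : ℝ => Real.sign (y - x₀)) :=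
      aux_sign_meas.comp (measurable_id.sub measurable_const)
    have hexp : Measurable (fun y : ℝ => Real.exp (-|x₀ - y|)) :=
      (Real.continuous_exp.comp ((continuous_const.sub continuous_id).abs.neg)).measurable
    exact ((hsgn.mul hexp).mul hfm).aestronglyMeasurable
  · refine Eventually.of_forall fun y => LipschitzOnWith.of_dist_le_mul fun x₁ h₁ x₂ h₂ => ?_
    rw [Metric.mem_ball, Real.dist_eq] at h₁ h₂
    rw [Real.dist_eq, Real.dist_eq]
    have hs : -|x₁ - y| ≤ 1 - |x₀ - y| := by
      have := abs_sub_abs_le_abs_sub (x₀ - y) (x₁ - y)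
      have h' : |x₀ - y - (x₁ - y)| = |x₀ - x₁| := by congr 1; ring
      rw [h'] at this
      rw [abs_sub_comm] at h₁
      linarith
    have ht : -|x₂ - y| ≤ 1 - |x₀ - y| := by
      have := abs_sub_abs_le_abs_sub (x₀ - y) (x₂ - y)
      have h' : |x₀ - y - (x₂ - y)| = |x₀ - x₂| := by congr 1; ring
      rw [h'] at this
      rw [abs_sub_comm] at h₂
      linarith
    have key1 : |Real.exp (-|x₁ - y|) - Real.exp (-|x₂ - y|)| ≤
        Real.exp (1 - |x₀ - y|) * |x₁ - x₂| := by
      refine le_trans (aux_exp_lip hs ht) ?_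
      refine mul_le_mul_of_nonneg_left ?_ (Real.exp_nonneg _)
      have h0 := abs_abs_sub_abs_le_abs_sub (x₁ - y) (x₂ - y)
      have h' : |x₁ - y - (x₂ - y)| = |x₁ - x₂| := by congr 1; ring
      rw [h'] at h0
      have h2 : (-|x₁ - y|) - (-|x₂ - y|) = -(|x₁ - y| - |x₂ - y|) := by ring
      rw [h2, abs_neg]
      exact h0
    rw [Real.coe_nnabs, abs_of_nonneg (hbound0 y)]
    show |Real.exp (-|x₁ - y|) * f y - Real.exp (-|x₂ - y|) * f y| ≤
      Real.exp 1 * (Real.exp (-|x₀ - y|) * f y) * |x₁ - x₂|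
    have hexp : Real.exp (1 - |x₀ - y|) = Real.exp 1 * Real.exp (-|x₀ - y|) := by
      rw [← Real.exp_add]; ring_nf
    calc |Real.exp (-|x₁ - y|) * f y - Real.exp (-|x₂ - y|) * f y|
        = |Real.exp (-|x₁ - y|) - Real.exp (-|x₂ - y|)| * f y := by
          rw [← sub_mul, abs_mul, abs_of_nonneg (hf0 y)]
      _ ≤ (Real.exp (1 - |x₀ - y|) * |x₁ - x₂|) * f y :=
          mul_le_mul_of_nonneg_right key1 (hf0 y)
      _ = Real.exp 1 * (Real.exp (-|x₀ - y|) * f y) * |x₁ - x₂| := by rw [hexp]; ring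
  · filter_upwards [hane] with y hy
    exact (aux_kernel_deriv x₀ y hy).mul_const (f y)

/-- the main estimate -/
private lemma key_bound (f : ℝ → ℝ) (hfm : Measurable f) (hf0 : ∀ y, 0 ≤ f y)
    (hfper : Function.Periodic f 1) (x : ℝ)
    (hint : Integrable (fun y => Real.exp (-|x - y|) * f y)) :
    |∫ y : ℝ, Real.sign (y - x) * Real.exp (-|x - y|) * f y| ≤
      ∫ y in Set.Ioc x (x + 1), f y := by
  have hane : ∀ᵐ y : ℝ, y ≠ x := by
    rw [MeasureTheory.ae_iff]
    simp only [ne_eq, not_not, Set.setOf_eq_eq_singleton]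
    exact measure_singleton x
  have hKm : Measurable (fun y : ℝ => Real.exp (-|x - y|) * f y) :=
    (Real.continuous_exp.comp ((continuous_const.sub continuous_id).abs.neg)).measurable.mul hfm
  have hgm : Measurable (fun y : ℝ => Real.sign (y - x) * Real.exp (-|x - y|) * f y) :=
    ((aux_sign_meas.comp (measurable_id.sub measurable_const)).mul
      (Real.continuous_exp.comp ((continuous_const.sub continuous_id).abs.neg)).measurable).mul hfm
  have hgint : Integrable (fun y : ℝ => Real.sign (y - x) * Real.exp (-|x - y|) * f y) := by
    refine hint.mono' hgm.aestronglyMeasurable (Eventually.of_forall fun y => ?_)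
    rw [Real.norm_eq_abs, mul_assoc, abs_mul]
    calc |Real.sign (y - x)| * |Real.exp (-|x - y|) * f y|
        ≤ 1 * |Real.exp (-|x - y|) * f y| :=
          mul_le_mul_of_nonneg_right (aux_sign_abs_le _) (abs_nonneg _)
      _ = Real.exp (-|x - y|) * f y := by
          rw [one_mul, abs_of_nonneg (mul_nonneg (Real.exp_nonneg _) (hf0 y))]
  -- integrability of the exponential pieces
  have hA_int : IntegrableOn (fun y => Real.exp (x - y) * f y) (Set.Ioi x) := by
    refine (hint.integrableOn (s := Set.Ioi x)).congr_fun (fun y hy => ?_) measurableSet_Ioi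
    rw [Set.mem_Ioi] at hy
    dsimp only
    rw [abs_of_neg (by linarith : x - y < 0)]
    ring_nf
  have hB_int : IntegrableOn (fun y => Real.exp (y - x) * f y) (Set.Iic x) := by
    refine (hint.integrableOn (s := Set.Iic x)).congr_fun (fun y hy => ?_) measurableSet_Iic
    rw [Set.mem_Iic] at hy
    dsimp only
    rw [abs_of_nonneg (by linarith : (0:ℝ) ≤ x - y)]
    ring_nf
  set A : ℝ := ∫ y in Set.Ioi x, Real.exp (x - y) * f y with hA
  set B : ℝ := ∫ y in Set.Iic x, Real.exp (y - x) * f y with hB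
  set C : ℝ := ∫ y in Set.Ioc x (x + 1), Real.exp (x - y) * f y with hC
  set D : ℝ := ∫ y in Set.Ioc x (x + 1), Real.exp (y - x - 1) * f y with hD
  -- the integral equals A - B
  have hsplit : (∫ y : ℝ, Real.sign (y - x) * Real.exp (-|x - y|) * f y) = A - B := by
    rw [← intervalIntegral.integral_Iic_add_Ioi (b := x) hgint.integrableOn hgint.integrableOn]
    have h1 : ∫ y in Set.Ioi x, Real.sign (y - x) * Real.exp (-|x - y|) * f y = A := by
      refine setIntegral_congr_fun measurableSet_Ioi fun y hy => ?_
      rw [Set.mem_Ioi] at hy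
      rw [Real.sign_of_pos (by linarith : (0:ℝ) < y - x),
        abs_of_neg (by linarith : x - y < 0)]
      ring_nf
    have h2 : ∫ y in Set.Iic x, Real.sign (y - x) * Real.exp (-|x - y|) * f y = -B := by
      rw [hB, ← MeasureTheory.integral_neg]
      refine setIntegral_congr_ae measurableSet_Iic ?_
      filter_upwards [hane] with y hy hy'
      rw [Set.mem_Iic] at hy'
      have : y < x := lt_of_le_of_ne hy' hy
      rw [Real.sign_of_neg (by linarith : y - x < 0),
        abs_of_pos (by linarith : (0:ℝ) < x - y)]
      ring_nf
    rw [h1, h2]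
    ring
  -- functional equation for A
  have hAeq : A = C + Real.exp (-1) * A := by
    have hu : Set.Ioc x (x + 1) ∪ Set.Ioi (x + 1) = Set.Ioi x :=
      Set.Ioc_union_Ioi_eq_Ioi (by linarith)
    have hdisj : Disjoint (Set.Ioc x (x + 1)) (Set.Ioi (x + 1)) := Set.Ioc_disjoint_Ioi le_rfl
    have hsum : A = C + ∫ y in Set.Ioi (x + 1), Real.exp (x - y) * f y := by
      rw [hA, hC, ← setIntegral_union hdisj measurableSet_Ioi
        (hA_int.mono_set Set.Ioc_subset_Ioi_self) (hA_int.mono_set (by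
          intro y hy; rw [Set.mem_Ioi] at hy ⊢; linarith)), hu]
    have htail : (∫ y in Set.Ioi (x + 1), Real.exp (x - y) * f y) = Real.exp (-1) * A := by
      rw [aux_shift (fun y => Real.exp (x - y) * f y) measurableSet_Ioi 1
        (t := Set.Ioi x) (fun y => by rw [Set.mem_Ioi, Set.mem_Ioi]; constructor <;> intro <;> linarith)]
      rw [hA, ← integral_const_mul]
      refine setIntegral_congr_fun measurableSet_Ioi fun y _ => ?_
      have hfp : f (y + 1) = f y := hfper y
      rw [hfp]
      rw [show x - (y + 1) = -1 + (x - y) by ring, Real.exp_add]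
      ring
    conv_lhs => rw [hsum]
    rw [htail]
  -- functional equation for B
  have hBeq : B = D + Real.exp (-1) * B := by
    have hu : Set.Iic (x - 1) ∪ Set.Ioc (x - 1) x = Set.Iic x :=
      Set.Iic_union_Ioc_eq_Iic (by linarith)
    have hdisj : Disjoint (Set.Iic (x - 1)) (Set.Ioc (x - 1) x) := Set.Iic_disjoint_Ioc le_rfl
    have hsum : B = (∫ y in Set.Iic (x - 1), Real.exp (y - x) * f y) +
        ∫ y in Set.Ioc (x - 1) x, Real.exp (y - x) * f y := by
      rw [hB, ← setIntegral_union hdisj measurableSet_Ioc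
        (hB_int.mono_set (by intro y hy; rw [Set.mem_Iic] at hy ⊢; linarith))
        (hB_int.mono_set Set.Ioc_subset_Iic_self), hu]
    have htail : (∫ y in Set.Iic (x - 1), Real.exp (y - x) * f y) = Real.exp (-1) * B := by
      rw [aux_shift (fun y => Real.exp (y - x) * f y) measurableSet_Iic (-1)
        (t := Set.Iic x) (fun y => by rw [Set.mem_Iic, Set.mem_Iic]; constructor <;> intro <;> linarith)]
      rw [hB, ← integral_const_mul]
      refine setIntegral_congr_fun measurableSet_Iic fun y _ => ?_
      have hfp : f (y + -1) = f y := by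
        have := hfper (y + -1)
        simpa using this.symm
      rw [hfp]
      rw [show y + -1 - x = -1 + (y - x) by ring, Real.exp_add]
      ring
    have hmid : (∫ y in Set.Ioc (x - 1) x, Real.exp (y - x) * f y) = D := by
      rw [aux_shift (fun y => Real.exp (y - x) * f y) measurableSet_Ioc (-1)
        (t := Set.Ioc x (x + 1)) (fun y => by
          rw [Set.mem_Ioc, Set.mem_Ioc]; constructor <;> intro ⟨ha, hb⟩ <;>
            constructor <;> linarith)]
      rw [hD]
      refine setIntegral_congr_fun measurableSet_Ioc fun y _ => ?_
      have hfp : f (y + -1) = f y := by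
        have := hfper (y + -1)
        simpa using this.symm
      rw [hfp]
      ring_nf
    conv_lhs => rw [hsum]
    rw [htail, hmid]
    ring
  -- integrability on Ioc for the bound
  have hf_int : IntegrableOn f (Set.Ioc x (x + 1)) := by
    refine Integrable.mono' ((hint.const_mul (Real.exp 1)).integrableOn)
      hfm.aestronglyMeasurable.restrict ?_
    rw [ae_restrict_iff' measurableSet_Ioc]
    refine Eventually.of_forall fun y hy => ?_
    rw [Set.mem_Ioc] at hy
    rw [Real.norm_eq_abs, abs_of_nonneg (hf0 y)]
    have h1 : |x - y| ≤ 1 := by rw [abs_le]; constructor <;> linarith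
    have h2 : Real.exp 1 * Real.exp (-|x - y|) = Real.exp (1 - |x - y|) := by
      rw [← Real.exp_add]; ring_nf
    have h3 : (1:ℝ) ≤ Real.exp (1 - |x - y|) := Real.one_le_exp (by linarith)
    calc f y = 1 * f y := (one_mul _).symm
      _ ≤ Real.exp (1 - |x - y|) * f y := mul_le_mul_of_nonneg_right h3 (hf0 y)
      _ = Real.exp 1 * (Real.exp (-|x - y|) * f y) := by rw [← h2]; ring
  have hC_int : IntegrableOn (fun y => Real.exp (x - y) * f y) (Set.Ioc x (x + 1)) :=
    hA_int.mono_set Set.Ioc_subset_Ioi_self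
  have hD_int : IntegrableOn (fun y => Real.exp (y - x - 1) * f y) (Set.Ioc x (x + 1)) := by
    have hcont : Continuous (fun y : ℝ => y - x - 1) :=
      (continuous_id.sub continuous_const).sub continuous_const
    refine Integrable.mono' hf_int
      (((Real.continuous_exp.comp hcont).measurable.mul hfm).aestronglyMeasurable.restrict) ?_
    rw [ae_restrict_iff' measurableSet_Ioc]
    refine Eventually.of_forall fun y hy => ?_
    rw [Set.mem_Ioc] at hy
    rw [Real.norm_eq_abs, abs_mul, abs_of_nonneg (hf0 y), abs_of_nonneg (Real.exp_nonneg _)]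
    have : Real.exp (y - x - 1) ≤ 1 := Real.exp_le_one_iff.2 (by linarith)
    calc Real.exp (y - x - 1) * f y ≤ 1 * f y := mul_le_mul_of_nonneg_right this (hf0 y)
      _ = f y := one_mul _
  -- bound on C - D
  have hCD : |C - D| ≤ (1 - Real.exp (-1)) * ∫ y in Set.Ioc x (x + 1), f y := by
    rw [hC, hD, ← MeasureTheory.integral_sub hC_int hD_int]
    have habs : |∫ y in Set.Ioc x (x + 1),
        (Real.exp (x - y) * f y - Real.exp (y - x - 1) * f y)| ≤
        ∫ y in Set.Ioc x (x + 1), |Real.exp (x - y) * f y - Real.exp (y - x - 1) * f y| := by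
      have := norm_integral_le_integral_norm (μ := volume.restrict (Set.Ioc x (x + 1)))
        (f := fun y => Real.exp (x - y) * f y - Real.exp (y - x - 1) * f y)
      simpa [Real.norm_eq_abs] using this
    refine le_trans habs ?_
    rw [← integral_const_mul]
    refine setIntegral_mono_on ((hC_int.sub hD_int).abs) (hf_int.const_mul _)
      measurableSet_Ioc fun y hy => ?_
    rw [Set.mem_Ioc] at hy
    rw [← sub_mul, abs_mul, abs_of_nonneg (hf0 y)]
    exact mul_le_mul_of_nonneg_right (aux_kb hy.1 hy.2) (hf0 y)
  -- put it together
  have hepos : 0 < 1 - Real.exp (-1) := by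
    have : Real.exp (-1) < 1 := Real.exp_lt_one_iff.2 (by norm_num)
    linarith
  have hlin : (A - B) * (1 - Real.exp (-1)) = C - D := by
    have e1 : A * (1 - Real.exp (-1)) = A - Real.exp (-1) * A := by ring
    have e2 : B * (1 - Real.exp (-1)) = B - Real.exp (-1) * B := by ring
    nlinarith [hAeq, hBeq]
  rw [hsplit]
  have h1 : |A - B| * (1 - Real.exp (-1)) ≤
      (1 - Real.exp (-1)) * ∫ y in Set.Ioc x (x + 1), f y := by
    rw [← abs_of_pos hepos, ← abs_mul, hlin]
    rwa [abs_of_pos hepos]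
  have h2 : (1 - Real.exp (-1)) * |A - B| ≤
      (1 - Real.exp (-1)) * ∫ y in Set.Ioc x (x + 1), f y := by
    rw [mul_comm]; exact h1
  exact le_of_mul_le_mul_left h2 hepos

theorem source_term_deriv_bound (u u' P P' : ℝ → ℝ)
    (hper : Function.Periodic u 1) (hper' : Function.Periodic u' 1)
    (hderiv : ∀ x, HasDerivAt u (u' x) x)
    (hint : ∀ x, Integrable (fun y =>
      Real.exp (-|x - y|) * ((u y) ^ 2 + (u' y) ^ 2 / 2)))
    (hP : ∀ x, P x = (1 / 2) * ∫ y : ℝ,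
      Real.exp (-|x - y|) * ((u y) ^ 2 + (u' y) ^ 2 / 2))
    (hP' : ∀ x, P' x = (1 / 2) * ∫ y : ℝ,
      Real.sign (y - x) * Real.exp (-|x - y|) * ((u y) ^ 2 + (u' y) ^ 2 / 2)) :
    (∀ᵐ x : ℝ, HasDerivAt P (P' x) x) ∧
    (∀ x, |P' x| ≤ ∫ y in (0:ℝ)..1, ((u y) ^ 2 + (u' y) ^ 2)) := by
  have humeas : Measurable u :=
    (continuous_iff_continuousAt.2 fun x => (hderiv x).continuousAt).measurable
  have hu'meas : Measurable u' := by
    have : u' = deriv u := funext fun x => ((hderiv x).deriv).symm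
    rw [this]
    exact measurable_deriv u
  have hfm : Measurable (fun y : ℝ => u y ^ 2 + u' y ^ 2 / 2) :=
    ((humeas.pow_const 2).add ((hu'meas.pow_const 2).div_const 2))
  have hf0 : ∀ y : ℝ, 0 ≤ u y ^ 2 + u' y ^ 2 / 2 := fun y => by positivity
  have hfper : Function.Periodic (fun y : ℝ => u y ^ 2 + u' y ^ 2 / 2) 1 := fun y => by
    simp [hper y, hper' y]
  constructor
  · refine Eventually.of_forall fun x₀ => ?_
    have key := key_deriv (fun y => u y ^ 2 + u' y ^ 2 / 2) hfm hf0 hint x₀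
    have key2 := key.const_mul (1 / 2 : ℝ)
    have : P' x₀ = (1 / 2 : ℝ) * ∫ y : ℝ,
        Real.sign (y - x₀) * Real.exp (-|x₀ - y|) * (u y ^ 2 + u' y ^ 2 / 2) := hP' x₀
    rw [← this] at key2
    refine key2.congr_of_eventuallyEq (Eventually.of_forall fun x => ?_)
    exact hP x
  · intro x
    -- integrability of f and u^2+u'^2 on [0,1] type intervals
    have hfIoc : IntegrableOn (fun y : ℝ => u y ^ 2 + u' y ^ 2 / 2) (Set.Ioc (0:ℝ) 1) := by
      refine Integrable.mono' (((hint 0).const_mul (Real.exp 1)).integrableOn)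
        hfm.aestronglyMeasurable.restrict ?_
      rw [ae_restrict_iff' measurableSet_Ioc]
      refine Eventually.of_forall fun y hy => ?_
      rw [Set.mem_Ioc] at hy
      rw [Real.norm_eq_abs, abs_of_nonneg (hf0 y)]
      have h1 : |(0:ℝ) - y| ≤ 1 := by rw [abs_le]; constructor <;> linarith
      have h3 : (1:ℝ) ≤ Real.exp (1 - |(0:ℝ) - y|) := Real.one_le_exp (by linarith)
      have h2 : Real.exp 1 * Real.exp (-|(0:ℝ) - y|) = Real.exp (1 - |(0:ℝ) - y|) := by
        rw [← Real.exp_add]; ring_nf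
      calc u y ^ 2 + u' y ^ 2 / 2 = 1 * (u y ^ 2 + u' y ^ 2 / 2) := (one_mul _).symm
        _ ≤ Real.exp (1 - |(0:ℝ) - y|) * (u y ^ 2 + u' y ^ 2 / 2) :=
            mul_le_mul_of_nonneg_right h3 (hf0 y)
        _ = Real.exp 1 * (Real.exp (-|(0:ℝ) - y|) * (u y ^ 2 + u' y ^ 2 / 2)) := by
            rw [← h2]; ring
    have hgIoc : IntegrableOn (fun y : ℝ => u y ^ 2 + u' y ^ 2) (Set.Ioc (0:ℝ) 1) := by
      refine Integrable.mono' (hfIoc.const_mul 2)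
        ((humeas.pow_const 2).add (hu'meas.pow_const 2)).aestronglyMeasurable.restrict ?_
      refine Eventually.of_forall fun y => ?_
      rw [Real.norm_eq_abs, abs_of_nonneg (by positivity)]
      nlinarith [sq_nonneg (u y), sq_nonneg (u' y)]
    have key := key_bound (fun y => u y ^ 2 + u' y ^ 2 / 2) hfm hf0 hfper x (hint x)
    have hper_int : (∫ y in Set.Ioc x (x + 1), (u y ^ 2 + u' y ^ 2 / 2)) =
        ∫ y in Set.Ioc (0:ℝ) 1, (u y ^ 2 + u' y ^ 2 / 2) := by
      have h1 : (∫ y in Set.Ioc x (x + 1), (u y ^ 2 + u' y ^ 2 / 2)) =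
          ∫ y in x..(x + 1), (u y ^ 2 + u' y ^ 2 / 2) :=
        (intervalIntegral.integral_of_le (by linarith)).symm
      have h2 : (∫ y in Set.Ioc (0:ℝ) 1, (u y ^ 2 + u' y ^ 2 / 2)) =
          ∫ y in (0:ℝ)..1, (u y ^ 2 + u' y ^ 2 / 2) :=
        (intervalIntegral.integral_of_le (by norm_num)).symm
      rw [h1, h2]
      have := hfper.intervalIntegral_add_eq x 0
      simpa using this
    rw [hP' x, abs_mul]
    have h12 : |(1:ℝ)/2| = 1/2 := by norm_num
    rw [h12]
    have hfle : (∫ y in Set.Ioc (0:ℝ) 1, (u y ^ 2 + u' y ^ 2 / 2)) ≤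
        ∫ y in Set.Ioc (0:ℝ) 1, (u y ^ 2 + u' y ^ 2) := by
      refine setIntegral_mono_on hfIoc hgIoc measurableSet_Ioc fun y _ => ?_
      nlinarith [sq_nonneg (u' y)]
    have hgnn : 0 ≤ ∫ y in Set.Ioc (0:ℝ) 1, (u y ^ 2 + u' y ^ 2) :=
      setIntegral_nonneg measurableSet_Ioc fun y _ => by positivity
    have hrw : (∫ y in (0:ℝ)..1, (u y ^ 2 + u' y ^ 2)) =
        ∫ y in Set.Ioc (0:ℝ) 1, (u y ^ 2 + u' y ^ 2) :=
      intervalIntegral.integral_of_le (by norm_num)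
    rw [hrw]
    calc (1/2 : ℝ) * |∫ y : ℝ, Real.sign (y - x) * Real.exp (-|x - y|) *
          (u y ^ 2 + u' y ^ 2 / 2)|
        ≤ (1/2 : ℝ) * ∫ y in Set.Ioc x (x + 1), (u y ^ 2 + u' y ^ 2 / 2) := by
          refine mul_le_mul_of_nonneg_left ?_ (by norm_num)
          exact key
      _ = (1/2 : ℝ) * ∫ y in Set.Ioc (0:ℝ) 1, (u y ^ 2 + u' y ^ 2 / 2) := by rw [hper_int]
      _ ≤ (1/2 : ℝ) * ∫ y in Set.Ioc (0:ℝ) 1, (u y ^ 2 + u' y ^ 2) :=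
          mul_le_mul_of_nonneg_left hfle (by norm_num)
      _ ≤ ∫ y in Set.Ioc (0:ℝ) 1, (u y ^ 2 + u' y ^ 2) := by linarith
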